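/- Let c ∈ [0,1) and let α, β be Borel measures on [0,1]. Then K_c(α,β)² ≤ K(α,α^R)·K(β,β^R), where the inequality is interpreted in [0,∞]. -/

import Mathlib

open MeasureTheory

/-- The reversal `λ^R` of a Borel measure on `[0,1]`, i.e. the image of `λ` under
`x ↦ 1 − x` (so that `λ^R(E) = λ({1 − x : x ∈ E})`). -/
noncomputable def revM (lam : Measure (Set.Icc (0 : ℝ) 1)) : Measure (Set.Icc (0 : ℝ) 1) :=
  lam.map (fun x => ⟨1 - x.1,
    Set.mem_Icc.mpr ⟨by linarith [(Set.mem_Icc.mp x.2).2], by linarith [(Set.mem_Icc.mp x.2).1]⟩⟩)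

/-- The bilinear functional
`K_c(λ,ν) = ∫∫ min{√(1−c)·xy, (1−x)(1−y)/√(1−c)} dλ(x) dν(y)`, valued in `[0,∞]`.
For `c = 0` this is the functional `K(λ,ν) = ∫∫ min{xy, (1−x)(1−y)} dλ(x) dν(y)`. -/
noncomputable def Kc (c : ℝ) (lam nu : Measure (Set.Icc (0 : ℝ) 1)) : ENNReal :=
  ∫⁻ x, ∫⁻ y, ENNReal.ofReal (min (Real.sqrt (1 - c) * (x.1 * y.1))
    ((1 - x.1) * (1 - y.1) / Real.sqrt (1 - c))) ∂nu ∂lam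

/- ### Auxiliary machinery -/

open Set
open scoped ENNReal

namespace Stmt6Aux

noncomputable def nu01 : Measure ℝ := volume.restrict (Set.Icc (0:ℝ) 1)
noncomputable def mu2 : Measure (ℝ×ℝ) := nu01.prod nu01
noncomputable def xtf (c t : ℝ) : ℝ := (1-c)*t/(1-c*t)
noncomputable def gf (c t : ℝ) : ℝ := (1-c*t)/Real.sqrt (1-c)

abbrev I01 := Set.Icc (0:ℝ) 1

instance : SigmaFinite nu01 := by unfold nu01; infer_instance
instance : SFinite mu2 := by unfold mu2; infer_instance

lemma nu01_Iio {m : ℝ} (h0 : 0 ≤ m) (h1 : m ≤ 1) : nu01 (Iio m) = ENNReal.ofReal m := by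
  rw [nu01, Measure.restrict_apply measurableSet_Iio]
  have h : Iio m ∩ Icc (0:ℝ) 1 = Ico 0 m := by
    ext x; simp only [mem_inter_iff, mem_Iio, mem_Icc, mem_Ico]
    constructor
    · rintro ⟨h, h2, h3⟩; exact ⟨h2, h⟩
    · rintro ⟨h2, h⟩; exact ⟨h, h2, by linarith⟩
  rw [h, Real.volume_Ico, sub_zero]

lemma nu01_Ioi {m : ℝ} (h0 : 0 ≤ m) (h1 : m ≤ 1) : nu01 (Ioi m) = ENNReal.ofReal (1 - m) := by
  rw [nu01, Measure.restrict_apply measurableSet_Ioi]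
  have h : Ioi m ∩ Icc (0:ℝ) 1 = Ioc m 1 := by
    ext x; simp only [mem_inter_iff, mem_Ioi, mem_Icc, mem_Ioc]
    constructor
    · rintro ⟨h, h2, h3⟩; exact ⟨h, h3⟩
    · rintro ⟨h2, h⟩; exact ⟨h2, by linarith, h⟩
  rw [h, Real.volume_Ioc]

lemma core {u v : ℝ} (hu : u ∈ Icc (0:ℝ) 1) (hv : v ∈ Icc (0:ℝ) 1) :
    ∫⁻ p : ℝ × ℝ, (if p.1 < u ∧ u < p.2 then (1:ℝ≥0∞) else 0) *
      (if p.1 < v ∧ v < p.2 then 1 else 0) ∂mu2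
    = ENNReal.ofReal (min u v * (1 - max u v)) := by
  obtain ⟨hu0, hu1⟩ := hu; obtain ⟨hv0, hv1⟩ := hv
  have h1 : ∀ p : ℝ×ℝ, (if p.1 < u ∧ u < p.2 then (1:ℝ≥0∞) else 0) *
      (if p.1 < v ∧ v < p.2 then 1 else 0)
      = (Iio (min u v) ×ˢ Ioi (max u v)).indicator (fun _ => 1) p := by
    intro p
    have e1 : ((if p.1 < u ∧ u < p.2 then (1:ℝ≥0∞) else 0) *
        (if p.1 < v ∧ v < p.2 then 1 else 0))
        = if (p.1 < u ∧ u < p.2) ∧ (p.1 < v ∧ v < p.2) then 1 else 0 := by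
      by_cases hA : p.1 < u ∧ u < p.2 <;> by_cases hB : p.1 < v ∧ v < p.2 <;>
        simp [hA, hB]
    rw [e1, Set.indicator_apply]
    refine if_congr ?_ rfl rfl
    simp only [mem_prod, mem_Iio, mem_Ioi, lt_min_iff, max_lt_iff]
    tauto
  rw [lintegral_congr h1]
  rw [show (fun (_ : ℝ×ℝ) => (1:ℝ≥0∞)) = (1 : (ℝ×ℝ) → ℝ≥0∞) from rfl]
  rw [lintegral_indicator_one (measurableSet_Iio.prod measurableSet_Ioi)]
  rw [mu2, Measure.prod_prod, nu01_Iio (le_min hu0 hv0) (min_le_of_left_le hu1),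
    nu01_Ioi (le_max_of_le_left hu0) (max_le hu1 hv1),
    ← ENNReal.ofReal_mul (le_min hu0 hv0)]

section alg
variable {c : ℝ}

lemma sqrt_pos' (hc1 : c < 1) : 0 < Real.sqrt (1-c) := Real.sqrt_pos.mpr (by linarith)

lemma den_pos (hc0 : 0 ≤ c) (hc1 : c < 1) {t : ℝ} (ht : t ∈ Icc (0:ℝ) 1) : 0 < 1 - c*t := by
  obtain ⟨h0, h1⟩ := ht
  nlinarith

lemma xtf_mem (hc0 : 0 ≤ c) (hc1 : c < 1) {t : ℝ} (ht : t ∈ Icc (0:ℝ) 1) :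
    xtf c t ∈ Icc (0:ℝ) 1 := by
  obtain ⟨h0, h1⟩ := ht
  have hd := den_pos hc0 hc1 (⟨h0, h1⟩ : t ∈ Icc (0:ℝ) 1)
  constructor
  · rw [xtf]; exact div_nonneg (by nlinarith) hd.le
  · rw [xtf, div_le_one hd]; nlinarith

lemma gf_nonneg (hc0 : 0 ≤ c) (hc1 : c < 1) {t : ℝ} (ht : t ∈ Icc (0:ℝ) 1) : 0 ≤ gf c t :=
  div_nonneg (den_pos hc0 hc1 ht).le (sqrt_pos' hc1).le

lemma g_mul_xt (hc0 : 0 ≤ c) (hc1 : c < 1) {t : ℝ} (ht : t ∈ Icc (0:ℝ) 1) :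
    gf c t * xtf c t = Real.sqrt (1-c) * t := by
  have hs := sqrt_pos' hc1
  have hss : Real.sqrt (1-c) * Real.sqrt (1-c) = 1-c := Real.mul_self_sqrt (by linarith)
  have hd := den_pos hc0 hc1 ht
  rw [gf, xtf]
  field_simp
  linear_combination (-t) * hss

lemma g_mul_one_sub_xt (hc0 : 0 ≤ c) (hc1 : c < 1) {t : ℝ} (ht : t ∈ Icc (0:ℝ) 1) :
    gf c t * (1 - xtf c t) = (1-t)/Real.sqrt (1-c) := by
  have hs := sqrt_pos' hc1
  have hd := den_pos hc0 hc1 ht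
  rw [gf, xtf]
  field_simp
  ring

lemma basic_minmax {u w : ℝ} (hu : u ∈ Icc (0:ℝ) 1) (hw : w ∈ Icc (0:ℝ) 1) :
    min u w * (1 - max u w) = min (u*(1-w)) ((1-u)*w) := by
  obtain ⟨hu0, hu1⟩ := hu; obtain ⟨hw0, hw1⟩ := hw
  rcases le_total u w with h | h
  · rw [min_eq_left h, max_eq_right h, min_eq_left (by nlinarith)]
  · rw [min_eq_right h, max_eq_left h, min_eq_right (by nlinarith)]
    ring

lemma key1 (hc0 : 0 ≤ c) (hc1 : c < 1) {x y : ℝ} (hx : x ∈ Icc (0:ℝ) 1)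
    (hy : y ∈ Icc (0:ℝ) 1) :
    gf c x * (min (xtf c x) (1-y) * (1 - max (xtf c x) (1-y)))
    = min (Real.sqrt (1-c) * (x*y)) ((1-x)*(1-y)/Real.sqrt (1-c)) := by
  have hg := gf_nonneg hc0 hc1 hx
  have hu := xtf_mem hc0 hc1 hx
  have hy' : (1-y) ∈ Icc (0:ℝ) 1 := ⟨by linarith [hy.2], by linarith [hy.1]⟩
  rw [basic_minmax hu hy', mul_min_of_nonneg _ _ hg]
  congr 1
  · have h : gf c x * (xtf c x * (1-(1-y))) = (gf c x * xtf c x) * y := by ring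
    rw [h, g_mul_xt hc0 hc1 hx]; ring
  · have h : gf c x * ((1 - xtf c x) * (1-y)) = (gf c x * (1 - xtf c x)) * (1-y) := by ring
    rw [h, g_mul_one_sub_xt hc0 hc1 hx]; ring

lemma key2 (hc0 : 0 ≤ c) (hc1 : c < 1) {x x' : ℝ} (hx : x ∈ Icc (0:ℝ) 1)
    (hx' : x' ∈ Icc (0:ℝ) 1) :
    gf c x * gf c x' * (min (xtf c x) (xtf c x') * (1 - max (xtf c x) (xtf c x')))
    = min (x*(1-x')) ((1-x)*x') := by
  have hs := sqrt_pos' hc1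
  have hg := gf_nonneg hc0 hc1 hx
  have hg' := gf_nonneg hc0 hc1 hx'
  have hu := xtf_mem hc0 hc1 hx
  have hu' := xtf_mem hc0 hc1 hx'
  rw [basic_minmax hu hu', mul_min_of_nonneg _ _ (mul_nonneg hg hg')]
  congr 1
  · have h : gf c x * gf c x' * (xtf c x * (1 - xtf c x'))
        = (gf c x * xtf c x) * (gf c x' * (1 - xtf c x')) := by ring
    rw [h, g_mul_xt hc0 hc1 hx, g_mul_one_sub_xt hc0 hc1 hx']
    field_simp
  · have h : gf c x * gf c x' * ((1 - xtf c x) * xtf c x')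
        = (gf c x * (1 - xtf c x)) * (gf c x' * xtf c x') := by ring
    rw [h, g_mul_one_sub_xt hc0 hc1 hx, g_mul_xt hc0 hc1 hx']
    field_simp

lemma key3 {y y' : ℝ} (hy : y ∈ Icc (0:ℝ) 1) (hy' : y' ∈ Icc (0:ℝ) 1) :
    min (1-y) (1-y') * (1 - max (1-y) (1-y')) = min (y*(1-y')) ((1-y)*y') := by
  have h1 : (1-y) ∈ Icc (0:ℝ) 1 := ⟨by linarith [hy.2], by linarith [hy.1]⟩
  have h2 : (1-y') ∈ Icc (0:ℝ) 1 := ⟨by linarith [hy'.2], by linarith [hy'.1]⟩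
  rw [basic_minmax h1 h2, min_comm]
  congr 1 <;> ring

end alg

noncomputable def ff (c : ℝ) (x : I01) (p : ℝ×ℝ) : ℝ≥0∞ :=
  ENNReal.ofReal (gf c x.1) * (if p.1 < xtf c x.1 ∧ xtf c x.1 < p.2 then 1 else 0)

noncomputable def hh (y : I01) (p : ℝ×ℝ) : ℝ≥0∞ :=
  if p.1 < 1-y.1 ∧ 1-y.1 < p.2 then 1 else 0

lemma ff_ne_top (c : ℝ) (x : I01) (p : ℝ×ℝ) : ff c x p ≠ ⊤ := by
  rw [ff]
  split
  · rw [mul_one]; exact ENNReal.ofReal_ne_top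
  · rw [mul_zero]; exact ENNReal.zero_ne_top

lemma meas_xtf (c : ℝ) : Measurable fun x : I01 => xtf c x.1 := by
  apply Measurable.div <;> fun_prop

lemma meas_ff (c : ℝ) : Measurable (Function.uncurry (ff c)) := by
  unfold Function.uncurry ff
  apply Measurable.mul
  · apply ENNReal.measurable_ofReal.comp
    unfold gf; apply Measurable.div <;> fun_prop
  · apply Measurable.ite _ measurable_const measurable_const
    apply MeasurableSet.inter
    · exact measurableSet_lt (measurable_snd.fst) ((meas_xtf c).comp measurable_fst)
    · exact measurableSet_lt ((meas_xtf c).comp measurable_fst) (measurable_snd.snd)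

lemma meas_hh : Measurable (Function.uncurry hh) := by
  unfold Function.uncurry hh
  apply Measurable.ite _ measurable_const measurable_const
  apply MeasurableSet.inter
  · exact measurableSet_lt (measurable_snd.fst)
      (measurable_const.sub (measurable_subtype_coe.comp measurable_fst))
  · exact measurableSet_lt (measurable_const.sub (measurable_subtype_coe.comp measurable_fst))
      (measurable_snd.snd)

lemma meas_ff_p (c : ℝ) (x : I01) : Measurable fun p => ff c x p :=
  Measurable.of_uncurry_left (meas_ff c)

lemma meas_ff_x (c : ℝ) (p : ℝ×ℝ) : Measurable fun x => ff c x p :=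
  Measurable.of_uncurry_right (meas_ff c)

lemma meas_hh_p (y : I01) : Measurable fun p => hh y p :=
  Measurable.of_uncurry_left meas_hh

lemma meas_hh_x (p : ℝ×ℝ) : Measurable fun y => hh y p :=
  Measurable.of_uncurry_right meas_hh

lemma P1 {c : ℝ} (hc0 : 0 ≤ c) (hc1 : c < 1) (x y : I01) :
    ∫⁻ p, ff c x p * hh y p ∂mu2
    = ENNReal.ofReal (min (Real.sqrt (1-c) * (x.1*y.1)) ((1-x.1)*(1-y.1)/Real.sqrt (1-c))) := by
  have hxm := xtf_mem hc0 hc1 x.2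
  have hym : (1-y.1) ∈ Icc (0:ℝ) 1 := ⟨by linarith [y.2.2], by linarith [y.2.1]⟩
  have e : ∀ p : ℝ×ℝ, ff c x p * hh y p = ENNReal.ofReal (gf c x.1) *
      ((if p.1 < xtf c x.1 ∧ xtf c x.1 < p.2 then 1 else 0) *
       (if p.1 < 1-y.1 ∧ 1-y.1 < p.2 then 1 else 0)) := by
    intro p; rw [ff, hh, mul_assoc]
  rw [lintegral_congr e, lintegral_const_mul' _ _ ENNReal.ofReal_ne_top, core hxm hym,
    ← ENNReal.ofReal_mul (gf_nonneg hc0 hc1 x.2), key1 hc0 hc1 x.2 y.2]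

lemma P2 {c : ℝ} (hc0 : 0 ≤ c) (hc1 : c < 1) (x x' : I01) :
    ∫⁻ p, ff c x p * ff c x' p ∂mu2
    = ENNReal.ofReal (min (x.1*(1-x'.1)) ((1-x.1)*x'.1)) := by
  have hxm := xtf_mem hc0 hc1 x.2
  have hxm' := xtf_mem hc0 hc1 x'.2
  have e : ∀ p : ℝ×ℝ, ff c x p * ff c x' p
      = (ENNReal.ofReal (gf c x.1) * ENNReal.ofReal (gf c x'.1)) *
      ((if p.1 < xtf c x.1 ∧ xtf c x.1 < p.2 then 1 else 0) *
       (if p.1 < xtf c x'.1 ∧ xtf c x'.1 < p.2 then 1 else 0)) := by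
    intro p; rw [ff, ff]; ring
  rw [lintegral_congr e,
    lintegral_const_mul' _ _ (ENNReal.mul_ne_top ENNReal.ofReal_ne_top ENNReal.ofReal_ne_top),
    core hxm hxm', ← ENNReal.ofReal_mul (gf_nonneg hc0 hc1 x.2),
    ← ENNReal.ofReal_mul (mul_nonneg (gf_nonneg hc0 hc1 x.2) (gf_nonneg hc0 hc1 x'.2)),
    key2 hc0 hc1 x.2 x'.2]

lemma P3 (y y' : I01) :
    ∫⁻ p, hh y p * hh y' p ∂mu2
    = ENNReal.ofReal (min (y.1*(1-y'.1)) ((1-y.1)*y'.1)) := by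
  have hym : (1-y.1) ∈ Icc (0:ℝ) 1 := ⟨by linarith [y.2.2], by linarith [y.2.1]⟩
  have hym' : (1-y'.1) ∈ Icc (0:ℝ) 1 := ⟨by linarith [y'.2.2], by linarith [y'.2.1]⟩
  have e : ∀ p : ℝ×ℝ, hh y p * hh y' p
      = (if p.1 < 1-y.1 ∧ 1-y.1 < p.2 then (1:ℝ≥0∞) else 0) *
        (if p.1 < 1-y'.1 ∧ 1-y'.1 < p.2 then 1 else 0) := fun p => rfl
  rw [lintegral_congr e, core hym hym', key3 y.2 y'.2]

lemma meas_integrand (c : ℝ) (x : I01) : Measurable fun y : I01 =>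
    ENNReal.ofReal (min (Real.sqrt (1-c) * (x.1*y.1)) ((1-x.1)*(1-y.1)/Real.sqrt (1-c))) := by
  apply ENNReal.measurable_ofReal.comp
  apply Measurable.min
  · exact measurable_const.mul (measurable_const.mul measurable_subtype_coe)
  · exact (measurable_const.mul (measurable_const.sub measurable_subtype_coe)).div_const _

lemma meas_rev : Measurable (fun x : I01 => (⟨1 - x.1,
    Set.mem_Icc.mpr ⟨by linarith [(Set.mem_Icc.mp x.2).2],
      by linarith [(Set.mem_Icc.mp x.2).1]⟩⟩ : I01)) :=
  Measurable.subtype_mk (measurable_const.sub measurable_subtype_coe)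

lemma KrevEq (γ : Measure I01) : Kc 0 γ (revM γ) =
    ∫⁻ x, ∫⁻ z, ENNReal.ofReal (min (x.1*(1-z.1)) ((1-x.1)*z.1)) ∂γ ∂γ := by
  rw [Kc, revM]
  refine lintegral_congr fun x => ?_
  rw [lintegral_map (meas_integrand 0 x) meas_rev]
  refine lintegral_congr fun z => ?_
  have h1 : Real.sqrt (1-(0:ℝ)) = 1 := by norm_num
  congr 1
  rw [h1, one_mul, div_one]
  ring_nf

lemma hh_ne_top (y : I01) (p : ℝ×ℝ) : hh y p ≠ ⊤ := by
  rw [hh]; split <;> simp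

lemma collapse (μ : Measure I01) [SFinite μ] {G : I01 → ℝ×ℝ → ℝ≥0∞}
    (hG : Measurable (Function.uncurry G)) {W : ℝ×ℝ → ℝ≥0∞} (hW : Measurable W) :
    ∫⁻ x, ∫⁻ p, G x p * W p ∂mu2 ∂μ = ∫⁻ p, (∫⁻ x, G x p ∂μ) * W p ∂mu2 := by
  rw [lintegral_lintegral_swap ((hG.mul (hW.comp measurable_snd)).aemeasurable)]
  exact lintegral_congr fun p => lintegral_mul_const _ hG.of_uncurry_right

lemma collapse_left (μ : Measure I01) [SFinite μ] {G : I01 → ℝ×ℝ → ℝ≥0∞}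
    (hG : Measurable (Function.uncurry G)) {v : ℝ×ℝ → ℝ≥0∞} (hv : ∀ p, v p ≠ ⊤)
    (hvm : Measurable v) :
    ∫⁻ y, ∫⁻ p, v p * G y p ∂mu2 ∂μ = ∫⁻ p, v p * (∫⁻ y, G y p ∂μ) ∂mu2 := by
  rw [lintegral_lintegral_swap (((hvm.comp measurable_snd).mul hG).aemeasurable)]
  exact lintegral_congr fun p => lintegral_const_mul' _ _ (hv p)

set_option maxHeartbeats 2000000 in
lemma main_ineq (c : ℝ) (hc0 : 0 ≤ c) (hc1 : c < 1) (α β : Measure I01)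
    [SFinite α] [SFinite β] :
    Kc c α β ^ 2 ≤ Kc 0 α (revM α) * Kc 0 β (revM β) := by
  have hFm0 : Measurable (fun z : (ℝ×ℝ) × I01 => ff c z.2 z.1) :=
    (meas_ff c).comp measurable_swap
  have hHm0 : Measurable (fun z : (ℝ×ℝ) × I01 => hh z.2 z.1) :=
    meas_hh.comp measurable_swap
  have hFm : Measurable (fun p => ∫⁻ x, ff c x p ∂α) := hFm0.lintegral_prod_right'
  have hHm : Measurable (fun p => ∫⁻ y, hh y p ∂β) := hHm0.lintegral_prod_right'
  have S1 : Kc c α β = ∫⁻ p, (∫⁻ x, ff c x p ∂α) * (∫⁻ y, hh y p ∂β) ∂mu2 := by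
    rw [Kc]
    have inner : ∀ x : I01, (∫⁻ y, ENNReal.ofReal (min (Real.sqrt (1-c) * (x.1*y.1))
        ((1-x.1)*(1-y.1)/Real.sqrt (1-c))) ∂β)
        = ∫⁻ p, ff c x p * (∫⁻ y, hh y p ∂β) ∂mu2 := by
      intro x
      rw [lintegral_congr (fun y => (P1 hc0 hc1 x y).symm)]
      exact collapse_left β meas_hh (ff_ne_top c x) (meas_ff_p c x)
    rw [lintegral_congr inner]
    exact collapse α (meas_ff c) hHm
  have S2 : Kc 0 α (revM α) = ∫⁻ p, (∫⁻ x, ff c x p ∂α) * (∫⁻ x, ff c x p ∂α) ∂mu2 := by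
    rw [KrevEq]
    have inner : ∀ x : I01, (∫⁻ z, ENNReal.ofReal (min (x.1*(1-z.1)) ((1-x.1)*z.1)) ∂α)
        = ∫⁻ p, ff c x p * (∫⁻ x', ff c x' p ∂α) ∂mu2 := by
      intro x
      rw [lintegral_congr (fun z => (P2 hc0 hc1 x z).symm)]
      exact collapse_left α (meas_ff c) (ff_ne_top c x) (meas_ff_p c x)
    rw [lintegral_congr inner]
    exact collapse α (meas_ff c) hFm
  have S3 : Kc 0 β (revM β) = ∫⁻ p, (∫⁻ y, hh y p ∂β) * (∫⁻ y, hh y p ∂β) ∂mu2 := by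
    rw [KrevEq]
    have inner : ∀ y : I01, (∫⁻ z, ENNReal.ofReal (min (y.1*(1-z.1)) ((1-y.1)*z.1)) ∂β)
        = ∫⁻ p, hh y p * (∫⁻ y', hh y' p ∂β) ∂mu2 := by
      intro y
      rw [lintegral_congr (fun z => (P3 y z).symm)]
      exact collapse_left β meas_hh (hh_ne_top y) (meas_hh_p y)
    rw [lintegral_congr inner]
    exact collapse β meas_hh hHm
  rw [S1, S2, S3]
  have h2 : ∀ z : ℝ≥0∞, z ^ (2:ℝ) = z * z := fun z => by
    rw [show (2:ℝ) = ((2:ℕ):ℝ) by norm_num, ENNReal.rpow_natCast, pow_two]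
  have hcs := ENNReal.lintegral_mul_le_Lp_mul_Lq mu2
    (Real.HolderConjugate.two_two : (2:ℝ).HolderConjugate 2) hFm.aemeasurable hHm.aemeasurable
  simp only [Pi.mul_apply, h2] at hcs
  have hsq : ∀ z : ℝ≥0∞, (z ^ (1/2:ℝ)) * (z ^ (1/2:ℝ)) = z := fun z => by
    rw [← pow_two, ← ENNReal.rpow_natCast (z ^ (1/2:ℝ)) 2, ← ENNReal.rpow_mul]
    norm_num
  calc (∫⁻ p, (∫⁻ x, ff c x p ∂α) * (∫⁻ y, hh y p ∂β) ∂mu2) ^ 2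
      ≤ ((∫⁻ p, (∫⁻ x, ff c x p ∂α) * (∫⁻ x, ff c x p ∂α) ∂mu2) ^ (1/2:ℝ) *
         (∫⁻ p, (∫⁻ y, hh y p ∂β) * (∫⁻ y, hh y p ∂β) ∂mu2) ^ (1/2:ℝ)) ^ 2 := by
        rw [pow_two, pow_two]; exact mul_le_mul' hcs hcs
    _ = (∫⁻ p, (∫⁻ x, ff c x p ∂α) * (∫⁻ x, ff c x p ∂α) ∂mu2) *
        (∫⁻ p, (∫⁻ y, hh y p ∂β) * (∫⁻ y, hh y p ∂β) ∂mu2) := by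
        rw [pow_two, mul_mul_mul_comm, hsq, hsq]

def Iopen : Set I01 := {x : I01 | 0 < x.1 ∧ x.1 < 1}

lemma meas_Iopen : MeasurableSet Iopen :=
  (measurableSet_lt measurable_const measurable_subtype_coe).inter
    (measurableSet_lt measurable_subtype_coe measurable_const)

lemma endpoints {x : I01} (hx : x ∉ Iopen) : x.1 = 0 ∨ x.1 = 1 := by
  by_contra h
  push_neg at h
  exact hx ⟨lt_of_le_of_ne x.2.1 (Ne.symm h.1), lt_of_le_of_ne x.2.2 h.2⟩

lemma Mc_vanish {c : ℝ} (hc1 : c < 1) {x y : I01} (h : x ∉ Iopen ∨ y ∉ Iopen) :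
    ENNReal.ofReal (min (Real.sqrt (1-c) * (x.1*y.1))
      ((1-x.1)*(1-y.1)/Real.sqrt (1-c))) = 0 := by
  rw [ENNReal.ofReal_eq_zero]
  rcases h with h | h <;> rcases endpoints h with h0 | h0
  · refine min_le_of_left_le (le_of_eq ?_)
    rw [h0]; ring
  · refine min_le_of_right_le (le_of_eq ?_)
    rw [h0]; simp
  · refine min_le_of_left_le (le_of_eq ?_)
    rw [h0]; ring
  · refine min_le_of_right_le (le_of_eq ?_)
    rw [h0]; simp

lemma Kc_restrict {c : ℝ} (hc1 : c < 1) (α β : Measure I01) :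
    Kc c α β = Kc c (α.restrict Iopen) (β.restrict Iopen) := by
  rw [Kc, Kc]
  have inner : ∀ x : I01, (∫⁻ y, ENNReal.ofReal (min (Real.sqrt (1-c) * (x.1*y.1))
      ((1-x.1)*(1-y.1)/Real.sqrt (1-c))) ∂β)
      = ∫⁻ y, ENNReal.ofReal (min (Real.sqrt (1-c) * (x.1*y.1))
      ((1-x.1)*(1-y.1)/Real.sqrt (1-c))) ∂(β.restrict Iopen) := by
    intro x
    rw [← lintegral_indicator meas_Iopen]
    refine lintegral_congr fun y => ?_
    by_cases hy : y ∈ Iopen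
    · rw [indicator_of_mem hy]
    · rw [indicator_of_notMem hy, Mc_vanish hc1 (Or.inr hy)]
  rw [lintegral_congr inner, ← lintegral_indicator meas_Iopen]
  refine lintegral_congr fun x => ?_
  by_cases hx : x ∈ Iopen
  · rw [indicator_of_mem hx]
  · rw [indicator_of_notMem hx, lintegral_congr (fun y => Mc_vanish hc1 (Or.inl hx)),
      lintegral_zero]

lemma Krev_mono (γ : Measure I01) :
    Kc 0 (γ.restrict Iopen) (revM (γ.restrict Iopen)) ≤ Kc 0 γ (revM γ) := by
  rw [Kc, Kc, revM, revM]
  refine lintegral_mono' Measure.restrict_le_self fun x => ?_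
  exact lintegral_mono' (Measure.map_mono Measure.restrict_le_self meas_rev) (le_refl _)

def Sn (n : ℕ) : Set I01 := {x : I01 | ((n:ℝ)+2)⁻¹ ≤ x.1 ∧ x.1 ≤ 1-((n:ℝ)+2)⁻¹}

lemma meas_Sn (n : ℕ) : MeasurableSet (Sn n) :=
  (measurableSet_le measurable_const measurable_subtype_coe).inter
    (measurableSet_le measurable_subtype_coe measurable_const)

lemma Sn_subset (n : ℕ) : Sn n ⊆ Iopen := by
  rintro x ⟨h1, h2⟩
  have hp : (0:ℝ) < ((n:ℝ)+2)⁻¹ := by positivity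
  exact ⟨lt_of_lt_of_le hp h1, by linarith⟩

lemma Iopen_subset_iUnion : Iopen ⊆ ⋃ n, Sn n := by
  rintro x ⟨hx0, hx1⟩
  have hm : 0 < min x.1 (1-x.1) := lt_min hx0 (by linarith)
  obtain ⟨n, hn⟩ := exists_nat_gt (min x.1 (1-x.1))⁻¹
  have hn2 : (0:ℝ) < (n:ℝ)+2 := by positivity
  have h2 : ((n:ℝ)+2)⁻¹ ≤ min x.1 (1-x.1) := by
    have h3 : (min x.1 (1-x.1))⁻¹ < (n:ℝ)+2 := by linarith
    have h4 := (inv_lt_inv₀ hn2 (inv_pos.mpr hm)).mpr h3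
    rw [inv_inv] at h4
    exact h4.le
  refine mem_iUnion.mpr ⟨n, le_trans h2 (min_le_left _ _), ?_⟩
  have := le_trans h2 (min_le_right _ _)
  linarith

lemma Krev_lower (γ : Measure I01) (n : ℕ) :
    ENNReal.ofReal ((((n:ℝ)+2)⁻¹)^2) * γ (Sn n) * γ (Sn n) ≤ Kc 0 γ (revM γ) := by
  rw [KrevEq]
  set ε := ((n:ℝ)+2)⁻¹ with hεdef
  have hε : 0 < ε := by rw [hεdef]; positivity
  have inner : ∀ x : I01, x ∈ Sn n →
      ENNReal.ofReal (ε^2) * γ (Sn n)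
      ≤ ∫⁻ z, ENNReal.ofReal (min (x.1*(1-z.1)) ((1-x.1)*z.1)) ∂γ := by
    intro x hx
    rw [← lintegral_indicator_const (meas_Sn n)]
    refine lintegral_mono fun z => ?_
    by_cases hz : z ∈ Sn n
    · rw [indicator_of_mem hz]
      refine ENNReal.ofReal_le_ofReal (le_min ?_ ?_)
      · obtain ⟨ha, hb⟩ := hx; obtain ⟨hc, hd⟩ := hz; nlinarith
      · obtain ⟨ha, hb⟩ := hx; obtain ⟨hc, hd⟩ := hz; nlinarith
    · rw [indicator_of_notMem hz]; exact zero_le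
  rw [mul_assoc, mul_comm (γ (Sn n)) (γ (Sn n)), ← mul_assoc]
  calc ENNReal.ofReal (ε^2) * γ (Sn n) * γ (Sn n)
      = ∫⁻ x, (Sn n).indicator (fun _ => ENNReal.ofReal (ε^2) * γ (Sn n)) x ∂γ := by
        rw [lintegral_indicator_const (meas_Sn n)]
    _ ≤ _ := by
        refine lintegral_mono fun x => ?_
        by_cases hx : x ∈ Sn n
        · rw [indicator_of_mem hx]; exact inner x hx
        · rw [indicator_of_notMem hx]; exact zero_le

lemma exists_Sn_pos (γ : Measure I01) (h : γ.restrict Iopen ≠ 0) :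
    ∃ n, (γ.restrict Iopen) (Sn n) ≠ 0 := by
  by_contra h'
  push_neg at h'
  apply h
  have hU : (γ.restrict Iopen) (⋃ n, Sn n) = 0 := measure_iUnion_null h'
  have hI : (γ.restrict Iopen) Iopen = 0 := measure_mono_null Iopen_subset_iUnion hU
  have hIc : (γ.restrict Iopen) Iopenᶜ = 0 := by
    rw [Measure.restrict_apply meas_Iopen.compl]
    simp
  rw [← Measure.measure_univ_eq_zero]
  have h1 : (γ.restrict Iopen) univ ≤ (γ.restrict Iopen) Iopen + (γ.restrict Iopen) Iopenᶜ := by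
    rw [← union_compl_self Iopen]
    exact measure_union_le _ _
  rw [hI, hIc, add_zero] at h1
  exact le_antisymm h1 zero_le

lemma sigmaFinite_restrict (γ : Measure I01)
    (h : ∀ n, (γ.restrict Iopen) (Sn n) ≠ ⊤) : SigmaFinite (γ.restrict Iopen) := by
  refine ⟨⟨⟨fun n => Sn n ∪ Iopenᶜ, fun _ => mem_univ _, fun n => ?_, ?_⟩⟩⟩
  · refine lt_of_le_of_lt (measure_union_le _ _) ?_
    have hIc : (γ.restrict Iopen) Iopenᶜ = 0 := by
      rw [Measure.restrict_apply meas_Iopen.compl]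
      simp
    rw [hIc, add_zero]
    exact lt_top_iff_ne_top.mpr (h n)
  · ext x
    simp only [mem_iUnion, mem_union, mem_univ, iff_true]
    by_cases hx : x ∈ Iopen
    · obtain ⟨n, hn⟩ := mem_iUnion.mp (Iopen_subset_iUnion hx)
      exact ⟨n, Or.inl hn⟩
    · exact ⟨0, Or.inr hx⟩

lemma Krev_ne_zero (γ : Measure I01) (n : ℕ) (hn : γ (Sn n) ≠ 0) :
    Kc 0 γ (revM γ) ≠ 0 := by
  have h1 := Krev_lower γ n
  have hp : (0:ℝ≥0∞) < ENNReal.ofReal ((((n:ℝ)+2)⁻¹)^2) * γ (Sn n) * γ (Sn n) := by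
    refine ENNReal.mul_pos (ne_of_gt (ENNReal.mul_pos ?_ hn)) hn
    exact ne_of_gt (ENNReal.ofReal_pos.mpr (by positivity))
  exact (lt_of_lt_of_le hp h1).ne'

lemma Krev_top (γ : Measure I01) (n : ℕ) (hn : γ (Sn n) = ⊤) :
    Kc 0 γ (revM γ) = ⊤ := by
  have h1 := Krev_lower γ n
  rw [hn] at h1
  have hne : ENNReal.ofReal ((((n:ℝ)+2)⁻¹)^2) ≠ 0 :=
    ne_of_gt (ENNReal.ofReal_pos.mpr (by positivity))
  rw [ENNReal.mul_top hne, ENNReal.top_mul (by simp)] at h1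
  exact top_unique h1

end Stmt6Aux

open Stmt6Aux in
/-- Lemma 2.8: `K_c(α,β)² ≤ K(α,α^R)·K(β,β^R)` in `[0,∞]`. -/
theorem stmt_6 (c : ℝ) (hc0 : 0 ≤ c) (hc1 : c < 1)
    (α β : Measure (Set.Icc (0 : ℝ) 1)) :
    Kc c α β ^ 2 ≤ Kc 0 α (revM α) * Kc 0 β (revM β) := by
  classical
  set α' := α.restrict Iopen with hα'
  set β' := β.restrict Iopen with hβ'
  refine le_trans ?_ (mul_le_mul' (Krev_mono α) (Krev_mono β))
  rw [Kc_restrict hc1 α β]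
  by_cases hα0 : α' = 0
  · have h0 : Kc c α' β' = 0 := by rw [hα0, Kc]; exact lintegral_zero_measure _
    rw [h0]
    simp
  by_cases hβ0 : β' = 0
  · have h0 : Kc c α' β' = 0 := by rw [hβ0, Kc]; simp
    rw [h0]
    simp
  by_cases hfin : (∀ n, α' (Sn n) ≠ ⊤) ∧ (∀ n, β' (Sn n) ≠ ⊤)
  · haveI := sigmaFinite_restrict α hfin.1
    haveI := sigmaFinite_restrict β hfin.2
    exact main_ineq c hc0 hc1 α' β'
  · rw [not_and_or] at hfin
    obtain ⟨nα, hnα⟩ := exists_Sn_pos α hα0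
    obtain ⟨nβ, hnβ⟩ := exists_Sn_pos β hβ0
    rcases hfin with hf | hf
    · push_neg at hf
      obtain ⟨n, hn⟩ := hf
      rw [Krev_top α' n hn, ENNReal.top_mul (Krev_ne_zero β' nβ hnβ)]
      exact le_top
    · push_neg at hf
      obtain ⟨n, hn⟩ := hf
      rw [Krev_top β' n hn, ENNReal.mul_top (Krev_ne_zero α' nα hnα)]
      exact le_top
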